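/- Define F(n,i) := ((−1)^{n−i−1}/(2n−2i−1)) · (2n−i)_{2i}/(i!)^2 and, for i ≥ 1, G(n,i) := (−1)^{n−i} · (−3 + 9i − 6i^2 − 30n + 62in − 28i^2 n − 104n^2 + 104in^2 − 112n^3) · i^2 · (2n−i+2)_{2i−2} / ((2n−2i+1) · (i!)^2), with G(n,0) := 0. Then for all integers n ≥ 1 and i ≥ 0, n·(2n+1)^2·F(n+1,i) − 3n·(6n−1)(6n+1)·F(n,i) = G(n,i+1) − G(n,i). -/

import Mathlib

/-- Shifted factorial `(a)_k = a(a+1)···(a+k-1)`. -/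
def shifted (a : ℚ) (k : ℕ) : ℚ := ∏ t ∈ Finset.range k, (a + t)

/-- The summand `F(n,i)`. -/
def Ffun (n i : ℕ) : ℚ :=
  ((-1 : ℚ)^((n:ℤ) - (i:ℤ) - 1) / (2*(n:ℚ) - 2*(i:ℚ) - 1)) *
    (shifted (2*(n:ℚ) - (i:ℚ)) (2*i) / (Nat.factorial i : ℚ)^2)

/-- The certificate `G(n,i)`. -/
def Gfun (n i : ℕ) : ℚ :=
  if i = 0 then 0 else
    (-1 : ℚ)^((n:ℤ) - (i:ℤ)) *
      (-3 + 9*(i:ℚ) - 6*(i:ℚ)^2 - 30*(n:ℚ) + 62*(i:ℚ)*(n:ℚ) - 28*(i:ℚ)^2*(n:ℚ)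
        - 104*(n:ℚ)^2 + 104*(i:ℚ)*(n:ℚ)^2 - 112*(n:ℚ)^3) *
      (i:ℚ)^2 * shifted (2*(n:ℚ) - (i:ℚ) + 2) (2*i - 2) /
      ((2*(n:ℚ) - 2*(i:ℚ) + 1) * (Nat.factorial i : ℚ)^2)

lemma shifted_succ (a : ℚ) (k : ℕ) : shifted a (k+1) = shifted a k * (a + k) :=
  Finset.prod_range_succ _ _

lemma shifted_succ' (a : ℚ) (k : ℕ) : shifted a (k+1) = a * shifted (a+1) k := by
  rw [shifted, Finset.prod_range_succ']
  have h : ∀ t ∈ Finset.range k, a + ((t+1:ℕ):ℚ) = (a+1) + t := by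
    intro t _; push_cast; ring
  rw [Finset.prod_congr rfl h]
  simp [shifted, mul_comm]

lemma odd_ne (n j : ℕ) : (2*(n:ℚ) - 2*(j:ℚ) - 1) ≠ 0 := by
  have h : ((2*(n:ℤ) - 2*(j:ℤ) - 1 : ℤ) : ℚ) ≠ 0 := by
    rw [Int.cast_ne_zero]; omega
  push_cast at h
  intro h0; exact h (by linarith)

theorem gosper_zeilberger_certificate (n i : ℕ) (hn : 1 ≤ n) :
    (n:ℚ) * (2*(n:ℚ) + 1)^2 * Ffun (n+1) i
      - 3*(n:ℚ) * (6*(n:ℚ) - 1) * (6*(n:ℚ) + 1) * Ffun n i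
    = Gfun n (i+1) - Gfun n i := by
  rcases i with _ | j
  · simp only [Ffun, Gfun, Nat.cast_zero, Nat.cast_one, if_neg one_ne_zero, if_pos rfl]
    norm_num [shifted]
    have hz : (-1:ℚ) ≠ 0 := by norm_num
    have s1 : (-1:ℚ)^(n:ℕ) = -(-1:ℚ)^((n:ℤ)-1) := by
      rw [← zpow_natCast (-1:ℚ) n, show ((n:ℕ):ℤ) = ((n:ℤ)-1)+1 from by ring,
        zpow_add_one₀ hz]; ring
    rw [s1]
    have d1 : 2*((n:ℚ)+1) - 1 ≠ 0 := by
      have : (0:ℚ) < (n:ℚ) := by exact_mod_cast hn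
      nlinarith
    have d2 : 2*(n:ℚ) - 1 ≠ 0 := by
      have := odd_ne n 0; intro h; apply this; push_cast; linarith
    have d3 : 2*(n:ℚ) - 2 + 1 ≠ 0 := by
      have := odd_ne n 0; intro h; apply this; push_cast; linarith
    have d4 : (n:ℚ)*2 - 1 ≠ 0 := by intro h; apply d2; linarith
    have d5 : 2*((n:ℚ)-1) + 1 ≠ 0 := by intro h; apply d2; linarith
    field_simp
    ring
  · simp only [Ffun, Gfun, if_neg (Nat.succ_ne_zero _)]
    push_cast
    have hz : (-1:ℚ) ≠ 0 := by norm_num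
    have h1 : shifted (2*((n:ℚ)+1) - ((j:ℚ)+1)) (2*(j+1))
        = shifted (2*(n:ℚ)-(j:ℚ)+1) (2*j) * (2*(n:ℚ)+(j:ℚ)+1) * (2*(n:ℚ)+(j:ℚ)+2) := by
      rw [show 2*((n:ℚ)+1) - ((j:ℚ)+1) = 2*(n:ℚ)-(j:ℚ)+1 from by ring,
        show 2*(j+1) = (2*j+1)+1 from by ring, shifted_succ, shifted_succ]
      push_cast; ring
    have h2 : shifted (2*(n:ℚ) - ((j:ℚ)+1)) (2*(j+1))
        = (2*(n:ℚ)-(j:ℚ)-1) * (2*(n:ℚ)-(j:ℚ)) * shifted (2*(n:ℚ)-(j:ℚ)+1) (2*j) := by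
      rw [show 2*(j+1) = (2*j+1)+1 from by ring, shifted_succ', shifted_succ',
        show 2*(n:ℚ)-((j:ℚ)+1)+1+1 = 2*(n:ℚ)-(j:ℚ)+1 from by ring]
      ring
    have h3 : shifted (2*(n:ℚ) - ((j:ℚ)+1+1) + 2) (2*(j+1+1)-2)
        = (2*(n:ℚ)-(j:ℚ)) * (shifted (2*(n:ℚ)-(j:ℚ)+1) (2*j) * (2*(n:ℚ)+(j:ℚ)+1)) := by
      rw [show 2*(j+1+1)-2 = (2*j+1)+1 from by omega, shifted_succ, shifted_succ',
        show 2*(n:ℚ)-((j:ℚ)+1+1)+2+1 = 2*(n:ℚ)-(j:ℚ)+1 from by ring]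
      push_cast; ring
    have h4 : shifted (2*(n:ℚ) - ((j:ℚ)+1) + 2) (2*(j+1)-2)
        = shifted (2*(n:ℚ)-(j:ℚ)+1) (2*j) := by
      rw [show 2*(j+1)-2 = 2*j from by omega,
        show 2*(n:ℚ)-((j:ℚ)+1)+2 = 2*(n:ℚ)-(j:ℚ)+1 from by ring]
    rw [h1, h2, h3, h4]
    have s1 : (-1:ℚ)^((n:ℤ)+1-((j:ℤ)+1)-1) = -(-1:ℚ)^((n:ℤ)-(j:ℤ)-2) := by
      rw [show (n:ℤ)+1-((j:ℤ)+1)-1 = ((n:ℤ)-(j:ℤ)-2)+1 from by ring, zpow_add_one₀ hz]; ring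
    have s2 : (-1:ℚ)^((n:ℤ)-((j:ℤ)+1)-1) = (-1:ℚ)^((n:ℤ)-(j:ℤ)-2) := by
      rw [show (n:ℤ)-((j:ℤ)+1)-1 = (n:ℤ)-(j:ℤ)-2 from by ring]
    have s3 : (-1:ℚ)^((n:ℤ)-((j:ℤ)+1+1)) = (-1:ℚ)^((n:ℤ)-(j:ℤ)-2) := by
      rw [show (n:ℤ)-((j:ℤ)+1+1) = (n:ℤ)-(j:ℤ)-2 from by ring]
    have s4 : (-1:ℚ)^((n:ℤ)-((j:ℤ)+1)) = -(-1:ℚ)^((n:ℤ)-(j:ℤ)-2) := by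
      rw [show (n:ℤ)-((j:ℤ)+1) = ((n:ℤ)-(j:ℤ)-2)+1 from by ring, zpow_add_one₀ hz]; ring
    rw [s1, s2, s3, s4]
    rw [show 2*((n:ℚ)+1)-2*((j:ℚ)+1)-1 = 2*(n:ℚ)-2*(j:ℚ)-1 from by ring,
      show 2*(n:ℚ)-2*((j:ℚ)+1)-1 = 2*(n:ℚ)-2*(j:ℚ)-3 from by ring,
      show 2*(n:ℚ)-2*((j:ℚ)+1+1)+1 = 2*(n:ℚ)-2*(j:ℚ)-3 from by ring,
      show 2*(n:ℚ)-2*((j:ℚ)+1)+1 = 2*(n:ℚ)-2*(j:ℚ)-1 from by ring]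
    simp only [Nat.factorial_succ]
    push_cast
    have d1 : 2*(n:ℚ)-2*(j:ℚ)-1 ≠ 0 := odd_ne n j
    have d2 : 2*(n:ℚ)-2*(j:ℚ)-3 ≠ 0 := by
      have := odd_ne n (j+1); intro h; apply this; push_cast; linarith
    have hf : ((j.factorial : ℚ)) ≠ 0 := Nat.cast_ne_zero.mpr (Nat.factorial_ne_zero j)
    have hj1 : ((j:ℚ)+1) ≠ 0 := by positivity
    have hj2 : ((j:ℚ)+1+1) ≠ 0 := by positivity
    have d6 : 2*((n:ℚ)-(j:ℚ)) - 1 ≠ 0 := by intro h; apply d1; linarith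
    have d7 : 2*((n:ℚ)-(j:ℚ)) - 3 ≠ 0 := by intro h; apply d2; linarith
    field_simp
    ring
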